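/- arXiv:1604.01576 — 3 statements merged into one kernel-verified Lean document; each statement's English description precedes it below -/
import Mathlib

section
/- Let F(z) = ∑_{j,k=1}^N Γ_j Γ_k g(z_j, z_k) with g symmetric and C², h(z) = g(z,z), and let P_D : ℝ^{2N} → D be the orthogonal projection onto the diagonal subspace D = {(a, …, a) : a ∈ ℝ²}. Then for c ∈ Ω, P_D[∇F(ĉ)] = (1/N) (∑_{k=1}^N Γ_k)² · (∇h(c), …, ∇h(c)). In particular, if ∑ Γ_k ≠ 0, then P_D[∇F(ĉ)] = 0 if and only if ∇h(c) = 0. -/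
open Matrix
open scoped BigOperators

/-- `F(z) = ∑_{j,k} Γ_j Γ_k g(z_j, z_k)`. -/
noncomputable def Ffun {N : ℕ} (Γ : Fin N → ℝ) (g : (Fin 2 → ℝ) → (Fin 2 → ℝ) → ℝ)
    (z : Fin N → Fin 2 → ℝ) : ℝ :=
  ∑ j : Fin N, ∑ k : Fin N, Γ j * Γ k * g (z j) (z k)

private theorem stmt7_key (N : ℕ) (Γ : Fin N → ℝ)
    (Ω : Set (Fin 2 → ℝ)) (hΩ : IsOpen Ω)
    (g : (Fin 2 → ℝ) → (Fin 2 → ℝ) → ℝ)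
    (hsym : ∀ x y, g x y = g y x)
    (hg : ContDiffOn ℝ 2 (fun p : (Fin 2 → ℝ) × (Fin 2 → ℝ) => g p.1 p.2) (Ω ×ˢ Ω))
    (c : Fin 2 → ℝ) (hc : c ∈ Ω)
    (gradF : Fin N → Fin 2 → ℝ) (gradh : Fin 2 → ℝ)
    (hgradF : ∀ (j : Fin N) (v : Fin 2 → ℝ),
      fderiv ℝ (fun w => Ffun Γ g (Function.update (fun _ : Fin N => c) j w)) c v
        = gradF j ⬝ᵥ v)
    (hgradh : ∀ v : Fin 2 → ℝ, fderiv ℝ (fun x => g x x) c v = gradh ⬝ᵥ v) :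
    ∀ (j : Fin N) (v : Fin 2 → ℝ),
      gradF j ⬝ᵥ v = Γ j * (∑ k, Γ k) * (gradh ⬝ᵥ v) := by
  have hdiffG : DifferentiableAt ℝ (fun p : (Fin 2 → ℝ) × (Fin 2 → ℝ) => g p.1 p.2) (c, c) :=
    (hg.differentiableOn (by norm_num)).differentiableAt
      (((hΩ.prod hΩ)).mem_nhds ⟨hc, hc⟩)
  set L := fderiv ℝ (fun p : (Fin 2 → ℝ) × (Fin 2 → ℝ) => g p.1 p.2) (c, c) with hL
  have hGd : HasFDerivAt (fun p : (Fin 2 → ℝ) × (Fin 2 → ℝ) => g p.1 p.2) L (c, c) :=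
    hdiffG.hasFDerivAt
  have hswap : ∀ v w : Fin 2 → ℝ, L (v, w) = L (w, v) := by
    intro v w
    have e := HasFDerivAt.comp (E := (Fin 2 → ℝ) × (Fin 2 → ℝ))
      (f := fun p : (Fin 2 → ℝ) × (Fin 2 → ℝ) => (p.2, p.1)) (c, c) hGd
      ((hasFDerivAt_snd (p := (c, c))).prodMk (hasFDerivAt_fst (p := (c, c))))
    have e2 : HasFDerivAt (fun p : (Fin 2 → ℝ) × (Fin 2 → ℝ) => g p.1 p.2)
        (L.comp ((ContinuousLinearMap.snd ℝ (Fin 2 → ℝ) (Fin 2 → ℝ)).prod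
          (ContinuousLinearMap.fst ℝ (Fin 2 → ℝ) (Fin 2 → ℝ)))) (c, c) :=
      e.congr_of_eventuallyEq (Filter.Eventually.of_forall fun p => hsym p.1 p.2)
    have huniq := hGd.unique e2
    calc L (v, w) = L.comp ((ContinuousLinearMap.snd ℝ _ _).prod
        (ContinuousLinearMap.fst ℝ _ _)) (w, v) := by simp
      _ = L (w, v) := by rw [← huniq]
  set d : (Fin 2 → ℝ) →L[ℝ] ℝ :=
    L.comp ((ContinuousLinearMap.id ℝ (Fin 2 → ℝ)).prod 0) with hd
  have hd0 : ∀ v : Fin 2 → ℝ, d v = L (v, 0) := by intro v; simp [hd]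
  have hd0' : ∀ v : Fin 2 → ℝ, L (0, v) = d v := by intro v; rw [hd0 v, hswap]
  have hsplit : ∀ v w : Fin 2 → ℝ, L (v, w) = L (v, 0) + L (0, w) := by
    intro v w
    rw [← map_add]
    norm_num
  have hdh : ∀ v : Fin 2 → ℝ, gradh ⬝ᵥ v = 2 * d v := by
    intro v
    have hpair : HasFDerivAt (fun x : Fin 2 → ℝ => (x, x))
        ((ContinuousLinearMap.id ℝ (Fin 2 → ℝ)).prod (ContinuousLinearMap.id ℝ (Fin 2 → ℝ))) c :=
      (hasFDerivAt_id c).prodMk (hasFDerivAt_id c)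
    have e' : HasFDerivAt ((fun p : (Fin 2 → ℝ) × (Fin 2 → ℝ) => g p.1 p.2) ∘
          (fun x : Fin 2 → ℝ => (x, x)))
        (L.comp ((ContinuousLinearMap.id ℝ (Fin 2 → ℝ)).prod (ContinuousLinearMap.id ℝ (Fin 2 → ℝ)))) c :=
      HasFDerivAt.comp c hGd hpair
    have hdiag : HasFDerivAt (fun x : Fin 2 → ℝ => g x x)
        ((fderiv ℝ (fun p : (Fin 2 → ℝ) × (Fin 2 → ℝ) => g p.1 p.2) (c, c)).comp
          ((ContinuousLinearMap.id ℝ (Fin 2 → ℝ)).prod (ContinuousLinearMap.id ℝ _))) c :=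
      e'.congr_of_eventuallyEq (Filter.Eventually.of_forall fun x => rfl)
    rw [← hgradh v, hdiag.fderiv]
    simp only [ContinuousLinearMap.comp_apply, ContinuousLinearMap.prod_apply,
      ContinuousLinearMap.id_apply]
    rw [hsplit, hd0' v, hd0 v]
    ring
  intro j v
  rw [← hgradF j v]
  have hite : ∀ (P : Prop) [Decidable P],
      HasFDerivAt (fun w : Fin 2 → ℝ => if P then w else c)
        (if P then (ContinuousLinearMap.id ℝ (Fin 2 → ℝ)) else 0) c := by
    intro P _
    split
    · exact hasFDerivAt_id c
    · exact hasFDerivAt_const c c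
  have hF : HasFDerivAt (fun w => Ffun Γ g (Function.update (fun _ : Fin N => c) j w))
      (∑ j' : Fin N, ∑ k' : Fin N, (Γ j' * Γ k') •
        (L.comp (((if j' = j then (ContinuousLinearMap.id ℝ (Fin 2 → ℝ)) else 0)).prod
          ((if k' = j then (ContinuousLinearMap.id ℝ (Fin 2 → ℝ)) else 0))))) c := by
    have heq : (fun w => Ffun Γ g (Function.update (fun _ : Fin N => c) j w))
        = fun w => ∑ j' : Fin N, ∑ k' : Fin N,
            Γ j' * Γ k' * g (if j' = j then w else c) (if k' = j then w else c) := by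
      funext w
      simp [Ffun, Function.update_apply]
    rw [heq]
    apply HasFDerivAt.fun_sum
    intro j' _
    apply HasFDerivAt.fun_sum
    intro k' _
    apply HasFDerivAt.const_mul
    have hpair : HasFDerivAt
        (fun w : Fin 2 → ℝ => ((if j' = j then w else c), (if k' = j then w else c)))
        (((if j' = j then (ContinuousLinearMap.id ℝ (Fin 2 → ℝ)) else 0)).prod
          ((if k' = j then (ContinuousLinearMap.id ℝ (Fin 2 → ℝ)) else 0))) c :=
      (hite _).prodMk (hite _)
    have hGd' : HasFDerivAt (fun p : (Fin 2 → ℝ) × (Fin 2 → ℝ) => g p.1 p.2) L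
        ((fun w : Fin 2 → ℝ => ((if j' = j then w else c), (if k' = j then w else c))) c) := by
      simpa using hGd
    exact HasFDerivAt.comp c hGd' hpair
  rw [hF.fderiv]
  simp only [ContinuousLinearMap.coe_sum', Finset.sum_apply, ContinuousLinearMap.coe_smul',
    Pi.smul_apply, ContinuousLinearMap.comp_apply, ContinuousLinearMap.prod_apply, smul_eq_mul]
  have hval : ∀ j' k' : Fin N,
      L ((if j' = j then (ContinuousLinearMap.id ℝ (Fin 2 → ℝ)) else 0) v,
         (if k' = j then (ContinuousLinearMap.id ℝ (Fin 2 → ℝ)) else 0) v)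
      = (if j' = j then d v else 0) + (if k' = j then d v else 0) := by
    intro j' k'
    by_cases h1 : j' = j <;> by_cases h2 : k' = j
    · simp only [h1, h2, if_true, ContinuousLinearMap.id_apply]
      rw [hsplit, ← hd0 v, hd0' v]
    · simp only [h1, h2, if_true, if_false, ContinuousLinearMap.id_apply,
        ContinuousLinearMap.zero_apply, add_zero]
      rw [← hd0 v]
    · simp only [h1, h2, if_true, if_false, ContinuousLinearMap.id_apply,
        ContinuousLinearMap.zero_apply, zero_add]
      rw [hd0' v]
    · simp [h1, h2, Prod.mk_zero_zero]
  simp only [hval]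
  rw [hdh v]
  simp only [mul_add, Finset.sum_add_distrib, mul_ite, mul_zero,
    Finset.sum_ite_eq, Finset.sum_ite_eq', Finset.mem_univ, if_true,
    ← Finset.sum_mul, ← Finset.mul_sum]
  have hinner : ∀ x : Fin N, (∑ x₁ : Fin N, if x = j then Γ x * Γ x₁ * d v else 0)
      = if x = j then Γ x * (∑ x₁ : Fin N, Γ x₁) * d v else 0 := by
    intro x
    split
    · rw [← Finset.sum_mul, ← Finset.mul_sum]
    · simp
  simp only [hinner, Finset.sum_ite_eq', Finset.mem_univ, if_true]
  ring

/-- with `P_D` the orthogonal projection onto the diagonal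
`D = {(a,…,a)}` (i.e. componentwise averaging), the gradient of `F` at `ĉ` satisfies
`P_D[∇F(ĉ)] = (1/N)(∑Γ_k)² (∇h(c),…,∇h(c))`; in particular if `∑Γ_k ≠ 0` then
`P_D[∇F(ĉ)] = 0 ↔ ∇h(c) = 0`. -/
theorem stmt_7 (N : ℕ) (hN : 2 ≤ N) (Γ : Fin N → ℝ) (hΓ : ∀ k, Γ k ≠ 0)
    (Ω : Set (Fin 2 → ℝ)) (hΩ : IsOpen Ω)
    (g : (Fin 2 → ℝ) → (Fin 2 → ℝ) → ℝ)
    (hsym : ∀ x y, g x y = g y x)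
    (hg : ContDiffOn ℝ 2 (fun p : (Fin 2 → ℝ) × (Fin 2 → ℝ) => g p.1 p.2) (Ω ×ˢ Ω))
    (c : Fin 2 → ℝ) (hc : c ∈ Ω)
    (gradF : Fin N → Fin 2 → ℝ) (gradh : Fin 2 → ℝ)
    (hgradF : ∀ (j : Fin N) (v : Fin 2 → ℝ),
      fderiv ℝ (fun w => Ffun Γ g (Function.update (fun _ : Fin N => c) j w)) c v
        = gradF j ⬝ᵥ v)
    (hgradh : ∀ v : Fin 2 → ℝ, fderiv ℝ (fun x => g x x) c v = gradh ⬝ᵥ v) :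
    ((fun _ : Fin N => (N : ℝ)⁻¹ • ∑ k : Fin N, gradF k)
        = fun _ : Fin N => (((∑ k : Fin N, Γ k) ^ 2 / N) • gradh))
    ∧ ((∑ k : Fin N, Γ k) ≠ 0 →
        (((fun _ : Fin N => (N : ℝ)⁻¹ • ∑ k : Fin N, gradF k)
            = (0 : Fin N → Fin 2 → ℝ)) ↔ gradh = 0)) := by
  have key := stmt7_key N Γ Ω hΩ g hsym hg c hc gradF gradh hgradF hgradh
  have hvec : ∀ j : Fin N, gradF j = (Γ j * ∑ k, Γ k) • gradh := by
    intro j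
    funext i
    have h := key j (Pi.single i 1)
    simpa [dotProduct_single] using h
  have hsum : ∑ k : Fin N, gradF k = ((∑ k : Fin N, Γ k) ^ 2) • gradh := by
    simp only [hvec, ← Finset.sum_smul, ← Finset.sum_mul, sq]
  have hNne : (N : ℝ) ≠ 0 := by positivity
  have hmain : (fun _ : Fin N => (N : ℝ)⁻¹ • ∑ k : Fin N, gradF k)
      = fun _ : Fin N => (((∑ k : Fin N, Γ k) ^ 2 / N) • gradh) := by
    funext _
    rw [hsum, smul_smul]
    congr 1
    field_simp
  refine ⟨hmain, fun hS => ?_⟩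
  constructor
  · intro h
    rw [hmain] at h
    have h0 := congrFun h ⟨0, by omega⟩
    have hne : (∑ k : Fin N, Γ k) ^ 2 / N ≠ 0 := div_ne_zero (pow_ne_zero _ hS) hNne
    simpa [hne] using (smul_eq_zero.mp h0)
  · intro h
    rw [hmain]
    funext _
    simp [h]
end

section
/- Let A be the 4×4 matrix with A₂₁ = 2ω, A₃₄ = -ω, A₄₃ = ω and all other entries zero, where ω ≠ 0. Then the space of 2π/|ω|-periodic solutions of the linear ODE ẇ = Aw has dimension exactly 3. -/
open Matrix

private lemma const_of_deriv_zero {f : ℝ → ℝ} (h : ∀ t, HasDerivAt f 0 t) (t : ℝ) :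
    f t = f 0 :=
  is_const_of_deriv_eq_zero (fun x => (h x).differentiableAt) (fun x => (h x).deriv) t 0

private lemma linear_of_deriv_const {f : ℝ → ℝ} {c : ℝ} (h : ∀ t, HasDerivAt f c t) (t : ℝ) :
    f t = f 0 + c * t := by
  have h2 : ∀ s, HasDerivAt (fun s => f s - c * s) 0 s := by
    intro s
    have := (h s).sub ((hasDerivAt_id s).const_mul c)
    exact this.congr_deriv (by ring)
  have := const_of_deriv_zero h2 t
  simp at this
  linarith

private lemma zero_of_rot {g h : ℝ → ℝ} {ω : ℝ}
    (hg : ∀ t, HasDerivAt g (-(ω * h t)) t) (hh : ∀ t, HasDerivAt h (ω * g t) t)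
    (hg0 : g 0 = 0) (hh0 : h 0 = 0) (t : ℝ) : g t = 0 ∧ h t = 0 := by
  have hsq : ∀ s, HasDerivAt (fun s => g s ^ 2 + h s ^ 2) 0 s := by
    intro s
    have := ((hg s).pow 2).add ((hh s).pow 2)
    refine this.congr_deriv ?_
    norm_num
    ring
  have hc := const_of_deriv_zero hsq t
  simp only [hg0, hh0] at hc
  constructor <;> nlinarith [sq_nonneg (g t), sq_nonneg (h t)]

private lemma hasDerivAt_cos_mul (ω t : ℝ) :
    HasDerivAt (fun x => Real.cos (ω * x)) (-(ω * Real.sin (ω * t))) t := by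
  have hid : HasDerivAt (fun x : ℝ => ω * x) ω t := by
    simpa using (hasDerivAt_id t).const_mul ω
  have := hid.cos
  convert this using 1
  ring

private lemma hasDerivAt_sin_mul (ω t : ℝ) :
    HasDerivAt (fun x => Real.sin (ω * x)) (ω * Real.cos (ω * t)) t := by
  have hid : HasDerivAt (fun x : ℝ => ω * x) ω t := by
    simpa using (hasDerivAt_id t).const_mul ω
  have := hid.sin
  convert this using 1
  ring

private lemma omega_mul_period {ω : ℝ} (hω : ω ≠ 0) :
    ω * (2 * Real.pi / |ω|) = 2 * Real.pi ∨ ω * (2 * Real.pi / |ω|) = -(2 * Real.pi) := by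
  rcases abs_choice ω with h | h
  · left; rw [h, ← mul_div_assoc, mul_div_cancel_left₀ _ hω]
  · right; rw [h, div_neg, mul_neg, ← mul_div_assoc, mul_div_cancel_left₀ _ hω]

private lemma cos_per {ω : ℝ} (hω : ω ≠ 0) (t : ℝ) :
    Real.cos (ω * (t + 2 * Real.pi / |ω|)) = Real.cos (ω * t) := by
  rw [mul_add]
  rcases omega_mul_period hω with h | h <;> rw [h]
  · exact Real.cos_add_two_pi _
  · rw [← sub_eq_add_neg]; exact Real.cos_sub_two_pi _

private lemma sin_per {ω : ℝ} (hω : ω ≠ 0) (t : ℝ) :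
    Real.sin (ω * (t + 2 * Real.pi / |ω|)) = Real.sin (ω * t) := by
  rw [mul_add]
  rcases omega_mul_period hω with h | h <;> rw [h]
  · exact Real.sin_add_two_pi _
  · rw [← sub_eq_add_neg]; exact Real.sin_sub_two_pi _

/-- the space of `2π/|ω|`-periodic solutions of `ẇ = Aw`, with
`A` the 4×4 matrix whose only nonzero entries are `A₂₁ = 2ω`, `A₃₄ = -ω`, `A₄₃ = ω`,
has dimension exactly 3: there are three linearly independent periodic solutions
spanning all periodic solutions. -/
theorem stmt_8 (ω : ℝ) (hω : ω ≠ 0) :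
    let A : Matrix (Fin 4) (Fin 4) ℝ :=
      !![0, 0, 0, 0; 2 * ω, 0, 0, 0; 0, 0, 0, -ω; 0, 0, ω, 0]
    ∃ B : Fin 3 → (ℝ → Fin 4 → ℝ),
      LinearIndependent ℝ B ∧
      (∀ i, (∀ t, HasDerivAt (B i) (A *ᵥ B i t) t) ∧
        Function.Periodic (B i) (2 * Real.pi / |ω|)) ∧
      ∀ w : ℝ → Fin 4 → ℝ, (∀ t, HasDerivAt w (A *ᵥ w t) t) →
        Function.Periodic w (2 * Real.pi / |ω|) →
        w ∈ Submodule.span ℝ (Set.range B) := by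
  intro A
  have hA : ∀ v : Fin 4 → ℝ, A *ᵥ v = ![0, 2 * ω * v 0, -(ω * v 3), ω * v 2] := by
    intro v
    funext i
    fin_cases i <;>
      simp [A, Matrix.mulVec, dotProduct, Fin.sum_univ_four]
  set B : Fin 3 → (ℝ → Fin 4 → ℝ) :=
    ![fun _ => ![0, 1, 0, 0],
      fun t => ![0, 0, Real.cos (ω * t), Real.sin (ω * t)],
      fun t => ![0, 0, -Real.sin (ω * t), Real.cos (ω * t)]] with hB
  refine ⟨B, ?_, ?_, ?_⟩
  · rw [Fintype.linearIndependent_iff]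
    intro g hg
    have h1 := congrFun (congrFun hg 0) 1
    have h2 := congrFun (congrFun hg 0) 2
    have h3 := congrFun (congrFun hg 0) 3
    simp [hB, Fin.sum_univ_three, Matrix.vecHead, Matrix.vecTail] at h1 h2 h3
    intro i
    fin_cases i <;> simp_all
  · intro i
    constructor
    · intro t
      rw [hA, hasDerivAt_pi]
      intro j
      fin_cases i <;> fin_cases j <;>
        simp [hB, Matrix.vecHead, Matrix.vecTail] <;>
        first
          | exact hasDerivAt_const _ _
          | exact hasDerivAt_cos_mul ω t
          | exact hasDerivAt_sin_mul ω t
          | exact (hasDerivAt_cos_mul ω t).neg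
          | exact (hasDerivAt_sin_mul ω t).neg
    · intro t
      funext j
      fin_cases i <;> fin_cases j <;>
        simp [hB, Matrix.vecHead, Matrix.vecTail, cos_per hω, sin_per hω]
  · intro w hw hper
    have hw' : ∀ t, ∀ j : Fin 4,
        HasDerivAt (fun t => w t j) ((![0, 2 * ω * w t 0, -(ω * w t 3), ω * w t 2]) j) t := by
      intro t j
      have := hw t
      rw [hA] at this
      exact hasDerivAt_pi.1 this j
    have h0d : ∀ t, HasDerivAt (fun t => w t 0) 0 t := by
      intro t; simpa using hw' t 0
    have h00 : ∀ t, w t 0 = w 0 0 := const_of_deriv_zero h0d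
    have hT : (0 : ℝ) < 2 * Real.pi / |ω| := by
      have h1 : (0 : ℝ) < |ω| := abs_pos.2 hω
      have h2 := Real.pi_pos
      positivity
    have h1d : ∀ t, HasDerivAt (fun t => w t 1) (2 * ω * w 0 0) t := by
      intro t
      have := hw' t 1
      simp only [h00 t] at this
      simpa using this
    have hw00 : w 0 0 = 0 := by
      have hp := congrFun (hper 0) 1
      rw [zero_add] at hp
      have hl := linear_of_deriv_const h1d (2 * Real.pi / |ω|)
      have hz : 2 * ω * w 0 0 * (2 * Real.pi / |ω|) = 0 := by
        simp only [hp] at hl; linarith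
      rcases mul_eq_zero.1 hz with h | h
      · rcases mul_eq_zero.1 h with h' | h'
        · exact absurd h' (by simp [hω])
        · exact h'
      · exact absurd h hT.ne'
    have hw0 : ∀ t, w t 0 = 0 := fun t => (h00 t).trans hw00
    have hw1 : ∀ t, w t 1 = w 0 1 := by
      apply const_of_deriv_zero
      intro t
      have := h1d t
      rw [hw00] at this
      simpa using this
    have h2d : ∀ t, HasDerivAt (fun t => w t 2) (-(ω * w t 3)) t := by
      intro t; simpa using hw' t 2
    have h3d : ∀ t, HasDerivAt (fun t => w t 3) (ω * w t 2) t := by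
      intro t; simpa using hw' t 3
    set c1 := w 0 2 with hc1
    set c2 := w 0 3 with hc2
    set g : ℝ → ℝ := fun t => w t 2 - (c1 * Real.cos (ω * t) - c2 * Real.sin (ω * t)) with hgdef
    set k : ℝ → ℝ := fun t => w t 3 - (c2 * Real.cos (ω * t) + c1 * Real.sin (ω * t)) with hkdef
    have hgd : ∀ t, HasDerivAt g (-(ω * k t)) t := by
      intro t
      have := (h2d t).sub
        (((hasDerivAt_cos_mul ω t).const_mul c1).sub ((hasDerivAt_sin_mul ω t).const_mul c2))
      refine this.congr_deriv ?_
      simp [hkdef]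
      ring
    have hkd : ∀ t, HasDerivAt k (ω * g t) t := by
      intro t
      have := (h3d t).sub
        (((hasDerivAt_cos_mul ω t).const_mul c2).add ((hasDerivAt_sin_mul ω t).const_mul c1))
      refine this.congr_deriv ?_
      simp [hgdef]
      ring
    have hg0 : g 0 = 0 := by simp [hgdef, hc1]
    have hk0 : k 0 = 0 := by simp [hkdef, hc2]
    have hrot := zero_of_rot hgd hkd hg0 hk0
    have hkey : w = w 0 1 • B 0 + c1 • B 1 + c2 • B 2 := by
      funext t j
      have hg := (hrot t).1
      have hk := (hrot t).2
      simp only [hgdef, hkdef] at hg hk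
      fin_cases j <;>
        simp [hB, Matrix.vecHead, Matrix.vecTail, Pi.add_apply, Pi.smul_apply, smul_eq_mul]
      · exact hw0 t
      · exact hw1 t
      · linarith
      · linarith
    rw [hkey]
    refine add_mem (add_mem ?_ ?_) ?_ <;>
      exact Submodule.smul_mem _ _ (Submodule.subset_span ⟨_, rfl⟩)
end

section
/- Let X be a separable Hilbert space with orthogonal decomposition X = closure(⊕_{k≥0} E_k) into pairwise orthogonal finite-dimensional subspaces, let X_n = ⊕_{k=0}^n E_k with orthogonal projection P_n, let L ∈ B(X) be bounded self-adjoint with Kern(L) = E₀ and L(E_k) = E_k for k ≠ 0, such that L + P₀ is an isomorphism onto a Hilbert subspace Y ≤ X. Let Ψ : cl(O) → X be continuous on the closure of a bounded set O ⊂ X with image contained in Y and (L+P₀)^{-1}∘Ψ(cl(O)) relatively compact in X. If Lu - Ψ(u) = 0 has no solution u ∈ ∂O, then there exists n₀ ∈ ℕ such that for all n ≥ n₀ and t ∈ [0,1] the equation Lu - P_{n₀}Ψ(u) - t(P_n - P_{n₀})Ψ(u) = 0 has no solution u ∈ X_n ∩ ∂O. -/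
open scoped BigOperators

/-- finite-dimensional approximation lemma: `X` a separable real
Hilbert space decomposed into pairwise orthogonal finite-dimensional subspaces
`E_k` with dense span, `X_n = ⊕_{k≤n} E_k` with orthogonal projections `P n`,
`L` bounded self-adjoint with `ker L = E₀`, `L(E_k) = E_k` for `k ≠ 0`,
`L + P₀` an isomorphism onto a closed (Hilbert) subspace `Y`, and `Ψ` continuous
on the closure of a bounded set `O` with values in `Y` such that
`(L+P₀)⁻¹ ∘ Ψ` (here `Φ`) has relatively compact image. If `Lu - Ψ(u) = 0` has no
solution on `∂O`, then there is `n₀` such that for all `n ≥ n₀`, `t ∈ [0,1]`, the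
equation `Lu - P_{n₀}Ψ(u) - t(P_n - P_{n₀})Ψ(u) = 0` has no solution in `X_n ∩ ∂O`. -/
theorem stmt_17
    {X : Type*} [NormedAddCommGroup X] [InnerProductSpace ℝ X] [CompleteSpace X]
    [TopologicalSpace.SeparableSpace X]
    (E : ℕ → Submodule ℝ X)
    (hfin : ∀ k, FiniteDimensional ℝ (E k))
    (horth : ∀ j k, j ≠ k → ∀ x ∈ E j, ∀ y ∈ E k, (inner ℝ x y : ℝ) = 0)
    (hdense : (⨆ k, E k).topologicalClosure = ⊤)
    (Xn : ℕ → Submodule ℝ X) (hXn : ∀ n, Xn n = ⨆ k ∈ Finset.range (n + 1), E k)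
    (P : ℕ → X →L[ℝ] X)
    (hPmem : ∀ n x, P n x ∈ Xn n)
    (hPorth : ∀ n x, ∀ y ∈ Xn n, (inner ℝ (x - P n x) y : ℝ) = 0)
    (L : X →L[ℝ] X)
    (hLsa : ∀ x y : X, (inner ℝ (L x) y : ℝ) = inner ℝ x (L y))
    (hker : LinearMap.ker (L : X →ₗ[ℝ] X) = E 0)
    (hLE : ∀ k : ℕ, k ≠ 0 → (E k).map (L : X →ₗ[ℝ] X) = E k)
    (Y : Submodule ℝ X) (hYclosed : IsClosed (Y : Set X))
    (hrange : ∀ x : X, L x + P 0 x ∈ Y)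
    (hinj : ∀ x : X, L x + P 0 x = 0 → x = 0)
    (hsurj : ∀ y ∈ Y, ∃ x : X, L x + P 0 x = y)
    (O : Set X) (hOopen : IsOpen O) (hObdd : Bornology.IsBounded O)
    (Ψ : X → X) (hΨcont : ContinuousOn Ψ (closure O))
    (hΨY : ∀ u ∈ closure O, Ψ u ∈ Y)
    (Φ : X → X) (hΦ : ∀ u ∈ closure O, L (Φ u) + P 0 (Φ u) = Ψ u)
    (hcpt : IsCompact (closure (Φ '' closure O)))
    (hnosol : ∀ u ∈ frontier O, L u - Ψ u ≠ 0) :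
    ∃ n₀ : ℕ, ∀ n ≥ n₀, ∀ t ∈ Set.Icc (0 : ℝ) 1, ∀ u ∈ (Xn n : Set X) ∩ frontier O,
      L u - P n₀ (Ψ u) - t • (P n (Ψ u) - P n₀ (Ψ u)) ≠ 0 := by
  have hEX : ∀ k m, k ≤ m → E k ≤ Xn m := by
    intro k m hkm
    rw [hXn m]
    exact le_iSup₂_of_le k (Finset.mem_range.mpr (Nat.lt_succ_of_le hkm)) le_rfl
  have hXmono : ∀ {a b : ℕ}, a ≤ b → Xn a ≤ Xn b := by
    intro a b hab
    rw [hXn a]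
    apply iSup_le; intro k; apply iSup_le; intro hk
    exact hEX k b (by have := Finset.mem_range.mp hk; omega)
  have hXn0 : Xn 0 = E 0 := by
    rw [hXn 0]
    simp
  have hPunique : ∀ (k : ℕ) (x a : X), a ∈ Xn k →
      (∀ y ∈ Xn k, (inner ℝ (x - a) y : ℝ) = 0) → P k x = a := by
    intro k x a ha h
    have hd : P k x - a ∈ Xn k := Submodule.sub_mem _ (hPmem k x) ha
    have h1 : (inner ℝ (P k x - a) (P k x - a) : ℝ) = 0 := by
      have e1 := h (P k x - a) hd
      have e2 := hPorth k x (P k x - a) hd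
      have e3 : (inner ℝ ((x - a) - (x - P k x)) (P k x - a) : ℝ) = 0 := by
        rw [inner_sub_left, e1, e2, sub_zero]
      have e4 : (x - a) - (x - P k x) = P k x - a := by abel
      rwa [e4] at e3
    exact sub_eq_zero.mp (inner_self_eq_zero.mp h1)
  have hPid : ∀ (k : ℕ) (y : X), y ∈ Xn k → P k y = y := by
    intro k y hy
    refine hPunique k y y hy fun z hz => by rw [sub_self, inner_zero_left]
  have hPnorm : ∀ (k : ℕ) (x : X), ‖P k x‖ ≤ ‖x‖ := by
    intro k x
    have h0 : (inner ℝ (P k x) (x - P k x) : ℝ) = 0 := by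
      rw [real_inner_comm]; exact hPorth k x (P k x) (hPmem k x)
    have h1 : ‖x‖ ^ 2 = ‖P k x‖ ^ 2 + 2 * (inner ℝ (P k x) (x - P k x) : ℝ) + ‖x - P k x‖ ^ 2 := by
      have := norm_add_sq_real (P k x) (x - P k x)
      simpa using this
    nlinarith [norm_nonneg (P k x), norm_nonneg x, norm_nonneg (x - P k x)]
  have hLX : ∀ (m : ℕ) (x : X), x ∈ Xn m → L x ∈ Xn m := by
    intro m x hx
    have hmap : (Xn m).map (L : X →ₗ[ℝ] X) ≤ Xn m := by
      rw [hXn m, Submodule.map_iSup]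
      apply iSup_le; intro k
      rw [Submodule.map_iSup]
      apply iSup_le; intro hk
      rcases eq_or_ne k 0 with h0 | h0
      · subst h0
        rintro y ⟨z, hz, rfl⟩
        have : z ∈ LinearMap.ker (L : X →ₗ[ℝ] X) := hker ▸ hz
        simp only [LinearMap.mem_ker] at this
        simpa [this] using (Xn m).zero_mem
      · rw [hLE k h0, ← hXn m]
        exact hEX k m (by have := Finset.mem_range.mp hk; omega)
    exact hmap ⟨x, hx, rfl⟩
  have hPL : ∀ (k : ℕ) (x : X), P k (L x) = L (P k x) := by
    intro k x
    refine hPunique k (L x) (L (P k x)) (hLX k _ (hPmem k x)) ?_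
    intro y hy
    have e : L x - L (P k x) = L (x - P k x) := by rw [map_sub]
    rw [e, hLsa]
    exact hPorth k x (L y) (hLX k y hy)
  have hP0P : ∀ (k : ℕ) (x : X), P 0 (P k x) = P 0 x := by
    intro k x
    refine (hPunique 0 x (P 0 (P k x)) (hPmem 0 _) ?_).symm
    intro y hy
    have e : x - P 0 (P k x) = (x - P k x) + (P k x - P 0 (P k x)) := by abel
    rw [e, inner_add_left, hPorth k x y (hXmono (Nat.zero_le k) hy),
      hPorth 0 (P k x) y hy, add_zero]
  have hP0L : ∀ x : X, P 0 (L x) = 0 := by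
    intro x
    refine hPunique 0 (L x) 0 (Submodule.zero_mem _) ?_
    intro y hy
    have hy0 : y ∈ LinearMap.ker (L : X →ₗ[ℝ] X) := hker ▸ (hXn0 ▸ hy)
    simp only [LinearMap.mem_ker, ContinuousLinearMap.coe_coe] at hy0
    rw [sub_zero, hLsa, hy0, inner_zero_right]
  have hPtendsto : ∀ x : X, Filter.Tendsto (fun k => P k x) Filter.atTop (nhds x) := by
    intro x
    rw [Metric.tendsto_atTop]
    intro ε hε
    have hx : x ∈ closure ((⨆ k, E k : Submodule ℝ X) : Set X) := by
      rw [← Submodule.topologicalClosure_coe, hdense]; trivial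
    obtain ⟨y, hy, hxy⟩ := Metric.mem_closure_iff.mp hx (ε / 2) (by linarith)
    have hy' : ∃ N, y ∈ Xn N := by
      have hle : (⨆ k, E k : Submodule ℝ X) ≤ ⨆ n, Xn n :=
        iSup_le fun k => le_trans (hEX k k le_rfl) (le_iSup _ k)
      have hdir : Directed (· ≤ ·) Xn := fun a b => ⟨max a b,
        hXmono (le_max_left a b), hXmono (le_max_right a b)⟩
      exact (Submodule.mem_iSup_of_directed Xn hdir).mp (hle hy)
    obtain ⟨N, hyN⟩ := hy'
    refine ⟨N, fun k hk => ?_⟩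
    have hPy : P k y = y := hPid k y (hXmono hk hyN)
    have : P k x - x = P k (x - y) + (y - x) := by
      rw [map_sub, hPy]; abel
    rw [dist_eq_norm, this]
    calc ‖P k (x - y) + (y - x)‖ ≤ ‖P k (x - y)‖ + ‖y - x‖ := norm_add_le _ _
      _ ≤ ‖x - y‖ + ‖y - x‖ := by gcongr; exact hPnorm k _
      _ < ε := by
          rw [dist_eq_norm] at hxy
          have : ‖y - x‖ = ‖x - y‖ := norm_sub_rev y x
          linarith
  have hPconvGen : ∀ (a : ℕ → X) (v : X) (ν : ℕ → ℕ),
      Filter.Tendsto a Filter.atTop (nhds v) → Filter.Tendsto ν Filter.atTop Filter.atTop →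
      Filter.Tendsto (fun k => P (ν k) (a k)) Filter.atTop (nhds v) := by
    intro a v ν ha hν
    have hbound : ∀ k, ‖P (ν k) (a k) - v‖ ≤ ‖a k - v‖ + ‖P (ν k) v - v‖ := by
      intro k
      have e : P (ν k) (a k) - v = P (ν k) (a k - v) + (P (ν k) v - v) := by
        rw [map_sub]; abel
      rw [e]
      refine le_trans (norm_add_le _ _) ?_
      gcongr
      exact hPnorm _ _
    have h1 : Filter.Tendsto (fun k => ‖a k - v‖) Filter.atTop (nhds 0) :=
      tendsto_iff_norm_sub_tendsto_zero.mp ha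
    have h2 : Filter.Tendsto (fun k => ‖P (ν k) v - v‖) Filter.atTop (nhds 0) :=
      (tendsto_iff_norm_sub_tendsto_zero.mp (hPtendsto v)).comp hν
    rw [tendsto_iff_norm_sub_tendsto_zero]
    exact squeeze_zero (fun k => norm_nonneg _) hbound (by simpa using h1.add h2)
  by_contra hcon
  push_neg at hcon
  choose n hn t ht u hu heq using hcon
  have hufr : ∀ m, u m ∈ frontier O := fun m => (hu m).2
  have hucl : ∀ m, u m ∈ closure O := fun m => frontier_subset_closure (hufr m)
  have hLu : ∀ m, L (u m) = (1 - t m) • P m (Ψ (u m)) + t m • P (n m) (Ψ (u m)) := by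
    intro m
    have h := heq m
    rw [sub_sub] at h
    have h' := sub_eq_zero.mp h
    rw [h', smul_sub, sub_smul, one_smul]
    abel
  have hP0Ψ : ∀ m, P 0 (Ψ (u m)) = 0 := by
    intro m
    have h := congrArg (P 0) (hLu m)
    rw [hP0L] at h
    simp only [map_add, map_smul, hP0P] at h
    have h2 := h.symm
    rwa [← add_smul, sub_add_cancel, one_smul] at h2
  have hfp : ∀ m, u m = (1 - t m) • P m (Φ (u m)) + t m • P (n m) (Φ (u m)) + P 0 (u m) := by
    intro m
    set w := Φ (u m) with hw
    set s := (1 - t m) • P m w + t m • P (n m) w + P 0 (u m) with hs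
    have key : ∀ k : ℕ, L (P k w) + P 0 (P k w) = P k (Ψ (u m)) := by
      intro k
      rw [← hPL, hP0P]
      have e2 : P k (P 0 w) = P 0 w := hPid k _ (hXmono (Nat.zero_le k) (hPmem 0 w))
      rw [← hΦ _ (hucl m), map_add, e2]
    have hP0uL : L (P 0 (u m)) = 0 := by
      have hm : P 0 (u m) ∈ LinearMap.ker (L : X →ₗ[ℝ] X) := hker ▸ (hXn0 ▸ hPmem 0 (u m))
      simpa using hm
    have hP0u0 : P 0 (P 0 (u m)) = P 0 (u m) := hPid 0 _ (hPmem 0 (u m))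
    have hsum : L s + P 0 s = L (u m) + P 0 (u m) := by
      have expand : L s + P 0 s =
          (1 - t m) • (L (P m w) + P 0 (P m w)) + t m • (L (P (n m) w) + P 0 (P (n m) w))
            + (L (P 0 (u m)) + P 0 (P 0 (u m))) := by
        simp only [hs, map_add, map_smul, smul_add]
        abel
      rw [expand, key m, key (n m), hP0uL, hP0u0, zero_add, hLu m]
    have hdiff : L (s - u m) + P 0 (s - u m) = 0 := by
      rw [map_sub, map_sub]
      rw [sub_add_sub_comm, hsum, sub_self]
    have := hinj _ hdiff
    rw [sub_eq_zero] at this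
    exact this.symm
  obtain ⟨R, hR⟩ := isBounded_iff_forall_norm_le.mp hObdd.closure
  have hwmem : ∀ m, Φ (u m) ∈ closure (Φ '' closure O) := fun m =>
    subset_closure ⟨u m, hucl m, rfl⟩
  obtain ⟨v, -, φ₁, hφ₁, hw1⟩ := hcpt.tendsto_subseq hwmem
  obtain ⟨tl, -, φ₂, hφ₂, ht2⟩ :=
    (isCompact_Icc (a := (0:ℝ)) (b := 1)).tendsto_subseq (fun k => ht (φ₁ k))
  haveI := hfin 0
  set z : ℕ → E 0 := fun k => ⟨P 0 (u (φ₁ (φ₂ k))), hXn0 ▸ hPmem 0 _⟩ with hzdef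
  have hzmem : ∀ k, z k ∈ Metric.closedBall (0 : E 0) R := by
    intro k
    rw [Metric.mem_closedBall, dist_zero_right]
    show ‖P 0 (u (φ₁ (φ₂ k)))‖ ≤ R
    exact le_trans (hPnorm 0 _) (hR _ (hucl _))
  obtain ⟨zl, -, φ₃, hφ₃, hz3⟩ := (isCompact_closedBall (0 : E 0) R).tendsto_subseq hzmem
  set σ : ℕ → ℕ := fun k => φ₁ (φ₂ (φ₃ k)) with hσdef
  have hσmono : StrictMono σ := hφ₁.comp (hφ₂.comp hφ₃)
  have hσtop : Filter.Tendsto σ Filter.atTop Filter.atTop := hσmono.tendsto_atTop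
  have hwσ : Filter.Tendsto (fun k => Φ (u (σ k))) Filter.atTop (nhds v) :=
    hw1.comp (hφ₂.comp hφ₃).tendsto_atTop
  have htσ : Filter.Tendsto (fun k => t (σ k)) Filter.atTop (nhds tl) :=
    ht2.comp hφ₃.tendsto_atTop
  have hzσ : Filter.Tendsto (fun k => P 0 (u (σ k))) Filter.atTop (nhds (zl : X)) :=
    (continuous_subtype_val.tendsto zl).comp hz3
  have hA : Filter.Tendsto (fun k => P (σ k) (Φ (u (σ k)))) Filter.atTop (nhds v) :=
    hPconvGen _ _ _ hwσ hσtop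
  have hB : Filter.Tendsto (fun k => P (n (σ k)) (Φ (u (σ k)))) Filter.atTop (nhds v) :=
    hPconvGen _ _ _ hwσ (Filter.tendsto_atTop_mono (fun k => hn (σ k)) hσtop)
  set ul : X := v + (zl : X) with huldef
  have huσ : Filter.Tendsto (fun k => u (σ k)) Filter.atTop (nhds ul) := by
    have h := ((((tendsto_const_nhds (x := (1:ℝ))).sub htσ).smul hA).add (htσ.smul hB)).add hzσ
    have hlim : (1 - tl) • v + tl • v + (zl : X) = ul := by
      rw [← add_smul, sub_add_cancel, one_smul]
    rw [hlim] at h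
    exact Filter.Tendsto.congr (fun k => (hfp (σ k)).symm) h
  have hulfr : ul ∈ frontier O :=
    isClosed_frontier.mem_of_tendsto huσ (Filter.Eventually.of_forall fun k => hufr (σ k))
  have hulcl : ul ∈ closure O := frontier_subset_closure hulfr
  have hΨσ : Filter.Tendsto (fun k => Ψ (u (σ k))) Filter.atTop (nhds (Ψ ul)) :=
    (hΨcont ul hulcl).tendsto.comp
      (tendsto_nhdsWithin_iff.mpr ⟨huσ, Filter.Eventually.of_forall fun k => hucl (σ k)⟩)
  have hLP0v : L v + P 0 v = Ψ ul := by
    have h1 : Filter.Tendsto (fun k => L (Φ (u (σ k))) + P 0 (Φ (u (σ k)))) Filter.atTop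
        (nhds (L v + P 0 v)) :=
      ((L.continuous.tendsto v).comp hwσ).add (((P 0).continuous.tendsto v).comp hwσ)
    exact tendsto_nhds_unique (Filter.Tendsto.congr (fun k => hΦ _ (hucl (σ k))) h1) hΨσ
  have hP0Psil : P 0 (Ψ ul) = 0 := by
    have h1 : Filter.Tendsto (fun k => P 0 (Ψ (u (σ k)))) Filter.atTop (nhds (P 0 (Ψ ul))) :=
      ((P 0).continuous.tendsto _).comp hΨσ
    have h2 : Filter.Tendsto (fun _ : ℕ => (0 : X)) Filter.atTop (nhds (P 0 (Ψ ul))) :=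
      Filter.Tendsto.congr (fun k => hP0Ψ (σ k)) h1
    exact tendsto_nhds_unique h2 tendsto_const_nhds
  have hP0v : P 0 v = 0 := by
    have h := congrArg (P 0) hLP0v
    rw [map_add, hP0L, hPid 0 _ (hPmem 0 v), zero_add, hP0Psil] at h
    exact h
  have hLv : L v = Ψ ul := by rw [← hLP0v, hP0v, add_zero]
  have hLz : L (zl : X) = 0 := by
    have hm : (zl : X) ∈ LinearMap.ker (L : X →ₗ[ℝ] X) := by rw [hker]; exact zl.2
    simpa using hm
  refine hnosol ul hulfr ?_
  rw [huldef, map_add, hLz, add_zero, hLv, sub_self]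
end
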